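/- Let k > 0, let a₁, a₂, J : ℝ² → ℂ with a₁, a₂ differentiable and J(y) ≠ 0 for all y, let u : ℝ² → ℂ be twice differentiable, let β : ℝ → ℝ be twice differentiable, and let f̄, f : ℝ² → ℂ. Assume that J(y)⁻¹( ∂₁(a₁∂₁u)(y) + ∂₂(a₂∂₂u)(y) ) + k²u(y) = −f̄(y) − f(y) for every y ∈ ℝ². Write (βu)(y) = β(y₂)u(y). Then at every point y ∈ ℝ² with f̄(y) = 0, one has J(y)⁻¹( ∂₁(a₁∂₁(βu))(y) + ∂₂(a₂∂₂(βu))(y) ) + k²β(y₂)u(y) = J(y)⁻¹·∂₂( z ↦ a₂(z)u(z)β′(z₂) )(y) + J(y)⁻¹·β′(y₂)·a₂(y)·∂₂u(y) − β(y₂)f(y). -/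

import Mathlib

/-- Partial derivative in the first coordinate direction. -/
noncomputable def pd1 (f : ℝ × ℝ → ℂ) (p : ℝ × ℝ) : ℂ := fderiv ℝ f p (1, 0)

/-- Partial derivative in the second coordinate direction. -/
noncomputable def pd2 (f : ℝ × ℝ → ℂ) (p : ℝ × ℝ) : ℂ := fderiv ℝ f p (0, 1)

private lemma pd_mul_apply (f g : ℝ × ℝ → ℂ) (z : ℝ × ℝ)
    (hf : DifferentiableAt ℝ f z) (hg : DifferentiableAt ℝ g z) (v : ℝ × ℝ) :
    fderiv ℝ (fun w => f w * g w) z v = fderiv ℝ f z v * g z + f z * fderiv ℝ g z v := by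
  rw [fderiv_fun_mul hf hg]
  simp [smul_eq_mul]
  ring

private lemma pd_beta (β : ℝ → ℝ) (hβ : ContDiff ℝ 2 β) (z v : ℝ × ℝ) :
    fderiv ℝ (fun w : ℝ × ℝ => (β w.2 : ℂ)) z v = Complex.ofReal (deriv β z.2) * (v.2 : ℂ) := by
  have h1 : HasFDerivAt (fun w : ℝ × ℝ => β w.2)
      ((deriv β z.2) • ContinuousLinearMap.snd ℝ ℝ ℝ) z :=
    ((hβ.differentiable two_ne_zero z.2).hasDerivAt).comp_hasFDerivAt z hasFDerivAt_snd
  have h2 : HasFDerivAt (fun w : ℝ × ℝ => (β w.2 : ℂ))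
      (Complex.ofRealCLM.comp ((deriv β z.2) • ContinuousLinearMap.snd ℝ ℝ ℝ)) z :=
    Complex.ofRealCLM.hasFDerivAt.comp z h1
  rw [h2.fderiv]
  simp [smul_eq_mul, mul_comm]

/-- Equation (2.14) of the paper: the equivalent form of the source transfer operator.  If `u`
solves the diagonal PML equation `J⁻¹∇·(A∇u) + k²u = −f̄ − f`, then at every point where `f̄`
vanishes, `J⁻¹∇·(A∇(βu)) + k²βu = J⁻¹∇·(A u ∇β) + J⁻¹∇β·(A∇u) − βf`. -/
theorem stmt_6
    (k : ℝ) (hk : 0 < k)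
    (a₁ a₂ J : ℝ × ℝ → ℂ)
    (ha₁ : Differentiable ℝ a₁) (ha₂ : Differentiable ℝ a₂)
    (hJ : ∀ y : ℝ × ℝ, J y ≠ 0)
    (u : ℝ × ℝ → ℂ) (hu : ContDiff ℝ 2 u)
    (β : ℝ → ℝ) (hβ : ContDiff ℝ 2 β)
    (fbar f : ℝ × ℝ → ℂ)
    (hueq : ∀ y : ℝ × ℝ,
      (J y)⁻¹ * (pd1 (fun z => a₁ z * pd1 u z) y + pd2 (fun z => a₂ z * pd2 u z) y)
        + (k : ℂ) ^ 2 * u y = -fbar y - f y) :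
    ∀ y : ℝ × ℝ, fbar y = 0 →
      (J y)⁻¹ * (pd1 (fun z => a₁ z * pd1 (fun w => (β w.2 : ℂ) * u w) z) y
          + pd2 (fun z => a₂ z * pd2 (fun w => (β w.2 : ℂ) * u w) z) y)
        + (k : ℂ) ^ 2 * (β y.2 : ℂ) * u y
      = (J y)⁻¹ * pd2 (fun z => a₂ z * u z * (Complex.ofReal (deriv β z.2))) y
        + (J y)⁻¹ * (Complex.ofReal (deriv β y.2)) * a₂ y * pd2 u y
        - (β y.2 : ℂ) * f y := by
  intro y hf0
  -- basic differentiability facts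
  have hud : Differentiable ℝ u := hu.differentiable two_ne_zero
  have hufd : ContDiff ℝ 1 (fun z => fderiv ℝ u z) := hu.fderiv_right (le_refl 2)
  have hpd1u : Differentiable ℝ (pd1 u) :=
    (hufd.clm_apply contDiff_const).differentiable one_ne_zero
  have hpd2u : Differentiable ℝ (pd2 u) :=
    (hufd.clm_apply contDiff_const).differentiable one_ne_zero
  have hBfd : Differentiable ℝ (fun w : ℝ × ℝ => (β w.2 : ℂ)) :=
    Complex.ofRealCLM.differentiable.comp
      ((hβ.differentiable two_ne_zero).comp differentiable_snd)
  have hderβ : Differentiable ℝ (deriv β) := by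
    have h2 : ContDiff ℝ (1 + 1) β := by exact_mod_cast hβ
    exact ((contDiff_succ_iff_deriv.mp h2).2.2).differentiable one_ne_zero
  have hD : Differentiable ℝ (fun w : ℝ × ℝ => Complex.ofReal (deriv β w.2)) :=
    Complex.ofRealCLM.differentiable.comp (hderβ.comp differentiable_snd)
  -- derivatives of β·u
  have hpdBu1 : ∀ z : ℝ × ℝ, pd1 (fun w => (β w.2 : ℂ) * u w) z = (β z.2 : ℂ) * pd1 u z := by
    intro z
    show fderiv ℝ (fun w => (β w.2 : ℂ) * u w) z (1, 0) = _
    rw [pd_mul_apply _ _ z (hBfd z) (hud z), pd_beta β hβ]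
    simp [pd1]
  have hpdBu2 : ∀ z : ℝ × ℝ, pd2 (fun w => (β w.2 : ℂ) * u w) z
      = Complex.ofReal (deriv β z.2) * u z + (β z.2 : ℂ) * pd2 u z := by
    intro z
    show fderiv ℝ (fun w => (β w.2 : ℂ) * u w) z (0, 1) = _
    rw [pd_mul_apply _ _ z (hBfd z) (hud z), pd_beta β hβ]
    simp [pd2]
  -- first term
  have hfun1 : (fun z => a₁ z * pd1 (fun w => (β w.2 : ℂ) * u w) z)
      = fun z => (β z.2 : ℂ) * (a₁ z * pd1 u z) := by
    funext z; rw [hpdBu1 z]; ring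
  have E1 : pd1 (fun z => a₁ z * pd1 (fun w => (β w.2 : ℂ) * u w) z) y
      = (β y.2 : ℂ) * pd1 (fun z => a₁ z * pd1 u z) y := by
    rw [hfun1]
    show fderiv ℝ (fun z => (β z.2 : ℂ) * (a₁ z * pd1 u z)) y (1, 0) = _
    rw [pd_mul_apply _ _ y (hBfd y) ((ha₁ y).fun_mul (hpd1u y)), pd_beta β hβ]
    simp [pd1]
  -- second term
  have hfun2 : (fun z => a₂ z * pd2 (fun w => (β w.2 : ℂ) * u w) z)
      = fun z => (a₂ z * u z * Complex.ofReal (deriv β z.2))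
          + (β z.2 : ℂ) * (a₂ z * pd2 u z) := by
    funext z; rw [hpdBu2 z]; ring
  have E2 : pd2 (fun z => a₂ z * pd2 (fun w => (β w.2 : ℂ) * u w) z) y
      = pd2 (fun z => a₂ z * u z * Complex.ofReal (deriv β z.2)) y
        + Complex.ofReal (deriv β y.2) * (a₂ y * pd2 u y)
        + (β y.2 : ℂ) * pd2 (fun z => a₂ z * pd2 u z) y := by
    rw [hfun2]
    show fderiv ℝ (fun z => (a₂ z * u z * Complex.ofReal (deriv β z.2))
          + (β z.2 : ℂ) * (a₂ z * pd2 u z)) y (0, 1) = _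
    rw [fderiv_fun_add (((ha₂ y).fun_mul (hud y)).fun_mul (hD y)) ((hBfd y).fun_mul ((ha₂ y).fun_mul (hpd2u y)))]
    simp only [ContinuousLinearMap.add_apply]
    rw [pd_mul_apply _ _ y (hBfd y) ((ha₂ y).fun_mul (hpd2u y)), pd_beta β hβ]
    simp [pd2]
    ring
  have huy := hueq y
  rw [hf0] at huy
  rw [E1, E2]
  linear_combination (β y.2 : ℂ) * huy
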